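/- Let L ⊆ ω^ω and let L' ⊆ {0,1}^ω be defined as L' = φ(L) ∪ D₂ ∪ D₃ ∪ D₄ (with φ, D₂, D₃, D₄ as below). Then Player 1 has a winning strategy in the Gale-Stewart game G(L) over alphabet ω if and only if Player 1 has a winning strategy in G(L') over alphabet {0,1}, and similarly for Player 2. In particular G(L) is determined iff G(L') is determined. -/

import Mathlib

/-- The history (list of moves) of the first `n` letters of the play `x`. -/
def histOf {X : Type*} (x : ℕ → X) (n : ℕ) : List X := List.ofFn fun i : Fin n => x i

/-- Player 1 follows strategy `σ` in the play `x`: Player 1 plays the letters at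
(0-indexed) even positions, each determined by `σ` from the preceding moves. -/
def P1Follows {X : Type*} (σ : List X → X) (x : ℕ → X) : Prop :=
  ∀ n, x (2 * n) = σ (histOf x (2 * n))

/-- Player 2 follows strategy `τ` in the play `x`: Player 2 plays the letters at
(0-indexed) odd positions, each determined by `τ` from the preceding moves. -/
def P2Follows {X : Type*} (τ : List X → X) (x : ℕ → X) : Prop :=
  ∀ n, x (2 * n + 1) = τ (histOf x (2 * n + 1))

/-- `σ` is a winning strategy for Player 1 in the Gale-Stewart game `G A`. -/
def P1Winning {X : Type*} (A : Set (ℕ → X)) (σ : List X → X) : Prop :=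
  ∀ x, P1Follows σ x → x ∈ A

/-- `τ` is a winning strategy for Player 2 in the Gale-Stewart game `G A`. -/
def P2Winning {X : Type*} (A : Set (ℕ → X)) (τ : List X → X) : Prop :=
  ∀ x, P2Follows τ x → x ∉ A

/-- The Gale-Stewart game `G A` is determined: one of the two players has a
winning strategy. -/
def GSDetermined {X : Type*} (A : Set (ℕ → X)) : Prop :=
  (∃ σ, P1Winning A σ) ∨ (∃ τ, P2Winning A τ)

/-- Cumulative concatenation of the first `n` blocks. -/
def cumCat {C : Type*} (b : ℕ → List C) : ℕ → List C
  | 0 => []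
  | n + 1 => cumCat b n ++ b n

/-- The infinite word obtained by concatenating the (nonempty) blocks `b 0, b 1, …`. -/
def infCat {C : Type*} (b : ℕ → List C) (d : C) : ℕ → C :=
  fun i => (cumCat b (i + 1)).getD i d

/-- The binary block `(11)^k·0` (with `1 = true`, `0 = false`). -/
def goodBlock (k : ℕ) : List Bool := List.replicate (2 * k) true ++ [false]

/-- The coding `φ : ω^ω → {0,1}^ω`, `φ((n_i)) = (11)^{n_1+1}·0·(11)^{n_2+1}·0⋯`. -/
def phiCode (x : ℕ → ℕ) : ℕ → Bool :=
  infCat (fun n => goodBlock (x n + 1)) false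

/-- `w` is a finite prefix of the infinite word `y`. -/
def listPrefixOf (w : List Bool) (y : ℕ → Bool) : Prop :=
  ∀ i, i < w.length → w.getD i false = y i

/-- `isBlocksCat n w` : the finite word `w` is a concatenation of `n` blocks of the
form `(11)^k·0` with `k ≥ 1`, i.e. `w ∈ [(11)^+·0]^n`. -/
def isBlocksCat : ℕ → List Bool → Prop
  | 0, w => w = []
  | n + 1, w => ∃ k ≥ 1, ∃ w', w = goodBlock k ++ w' ∧ isBlocksCat n w'

/-- `D₂ = {y : ∃ n,k ≥ 0, y ∈ [(11)^+0]^{2n}·1^{2k+1}·0·{0,1}^ω}`. -/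
def Dtwo : Set (ℕ → Bool) :=
  {y | ∃ n k w, isBlocksCat (2 * n) w ∧
        listPrefixOf (w ++ List.replicate (2 * k + 1) true ++ [false]) y}

/-- `D₃ = {y : ∃ n ≥ 0, y ∈ [(11)^+0]^{2n+1}·1^ω}`. -/
def Dthree : Set (ℕ → Bool) :=
  {y | ∃ n w, isBlocksCat (2 * n + 1) w ∧ listPrefixOf w y ∧ ∀ i ≥ w.length, y i = true}

/-- `D₄ = {y : ∃ n ≥ 0, y ∈ [(11)^+0]^{2n+1}·0·{0,1}^ω}`. -/
def Dfour : Set (ℕ → Bool) :=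
  {y | ∃ n w, isBlocksCat (2 * n + 1) w ∧ listPrefixOf (w ++ [false]) y}

-- state machine
inductive PSt where
  | ok (l : List ℕ) (r : ℕ)
  | bad1
  | bad2
deriving DecidableEq

def pstep : PSt → Bool → PSt
  | .ok l r, true => .ok l (r + 1)
  | .ok l r, false =>
      if r % 2 = 1 then (if l.length % 2 = 0 then .bad2 else .bad1)
      else if r = 0 then (if l.length % 2 = 0 then .bad1 else .bad2)
      else .ok (l ++ [r / 2 - 1]) 0
  | s, _ => s

def stA (y : ℕ → Bool) : ℕ → PSt
  | 0 => .ok [] 0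
  | n + 1 => pstep (stA y n) (y n)

@[simp] lemma pstep_bad1 (b : Bool) : pstep .bad1 b = .bad1 := by cases b <;> rfl
@[simp] lemma pstep_bad2 (b : Bool) : pstep .bad2 b = .bad2 := by cases b <;> rfl
@[simp] lemma pstep_true (l r) : pstep (.ok l r) true = .ok l (r + 1) := rfl

lemma pstep_false_even (l r) (h2 : r % 2 = 0) (h0 : r ≠ 0) :
    pstep (.ok l r) false = .ok (l ++ [r / 2 - 1]) 0 := by
  have h1 : ¬ (r % 2 = 1) := by omega
  simp [pstep, h0, h1]

lemma pstep_false_2k2 (l k) : pstep (.ok l (2 * k + 2)) false = .ok (l ++ [k]) 0 := by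
  have h : (2 * k + 2) / 2 - 1 = k := by omega
  rw [pstep_false_even l _ (by omega) (by omega), h]

def encodeL : List ℕ → List Bool
  | [] => []
  | a :: l => goodBlock (a + 1) ++ encodeL l

@[simp] lemma goodBlock_length (k : ℕ) : (goodBlock k).length = 2 * k + 1 := by
  simp [goodBlock]

lemma encodeL_append (l : List ℕ) (a : ℕ) :
    encodeL (l ++ [a]) = encodeL l ++ goodBlock (a + 1) := by
  induction l with
  | nil => simp [encodeL]
  | cons b l ih => simp [encodeL, ih]

lemma encodeL_length_mod (l : List ℕ) : (encodeL l).length % 2 = l.length % 2 := by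
  induction l with
  | nil => rfl
  | cons a l ih => simp [encodeL]; omega

lemma encodeL_length_ge (l : List ℕ) : l.length ≤ (encodeL l).length := by
  induction l with
  | nil => simp [encodeL]
  | cons a l ih => simp [encodeL]; omega

def matchesAt (y : ℕ → Bool) (n : ℕ) (w : List Bool) : Prop :=
  ∀ i < w.length, w.getD i false = y (n + i)

lemma matchesAt_append {y n w₁ w₂} :
    matchesAt y n (w₁ ++ w₂) ↔ matchesAt y n w₁ ∧ matchesAt y (n + w₁.length) w₂ := by
  constructor
  · intro h
    refine ⟨fun i hi => ?_, fun i hi => ?_⟩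
    · have := h i (by simp; omega)
      rwa [List.getD_eq_getElem _ _ (by simp; omega), List.getElem_append_left (by omega),
        ← List.getD_eq_getElem _ _ hi] at this
    · have := h (w₁.length + i) (by simp; omega)
      rwa [List.getD_eq_getElem _ _ (by simp; omega),
        List.getElem_append_right (by omega), ← List.getD_eq_getElem _ _ (by simpa using hi),
        Nat.add_sub_cancel_left, ← Nat.add_assoc] at this
  · rintro ⟨h₁, h₂⟩ i hi
    rcases Nat.lt_or_ge i w₁.length with hlt | hge
    · rw [List.getD_eq_getElem _ _ (by simp; omega), List.getElem_append_left hlt,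
        ← List.getD_eq_getElem _ _ hlt]
      exact h₁ i hlt
    · have hi2 : i - w₁.length < w₂.length := by simp at hi; omega
      rw [List.getD_eq_getElem _ _ (by simpa using hi), List.getElem_append_right hge,
        ← List.getD_eq_getElem _ _ hi2]
      have := h₂ _ hi2
      rw [this]
      congr 1
      omega

lemma matchesAt_replicate_true {y n j} :
    matchesAt y n (List.replicate j true) ↔ ∀ i < j, y (n + i) = true := by
  constructor
  · intro h i hi
    have := h i (by simpa using hi)
    rw [List.getD_eq_getElem _ _ (by simpa using hi), List.getElem_replicate] at this
    exact this.symm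
  · intro h i hi
    simp at hi
    rw [List.getD_eq_getElem _ _ (by simpa using hi), List.getElem_replicate]
    exact (h i hi).symm

lemma matchesAt_single {y n b} : matchesAt y n [b] ↔ y n = b := by
  constructor
  · intro h; have := h 0 (by simp); simpa using this.symm
  · intro h i hi
    simp at hi
    subst hi
    simpa using h.symm

-- state run lemmas
lemma stA_succ (y n) : stA y (n + 1) = pstep (stA y n) (y n) := rfl

lemma stA_run_true (y : ℕ → Bool) (n j : ℕ) (l r)
    (hs : stA y n = .ok l r) (h : ∀ i < j, y (n + i) = true) :
    stA y (n + j) = .ok l (r + j) := by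
  induction j with
  | zero => simpa using hs
  | succ j ih =>
    have : stA y (n + j) = .ok l (r + j) := ih (fun i hi => h i (by omega))
    rw [← Nat.add_assoc, stA_succ, this, h j (by omega)]
    simp [Nat.add_assoc]

lemma stA_block (y : ℕ → Bool) (n : ℕ) (l : List ℕ) (k : ℕ)
    (hs : stA y n = .ok l 0) (hm : matchesAt y n (goodBlock (k + 1))) :
    stA y (n + (2 * (k + 1) + 1)) = .ok (l ++ [k]) 0 := by
  rw [goodBlock, matchesAt_append] at hm
  have h1 := matchesAt_replicate_true.1 hm.1
  have h2 : y (n + 2 * (k + 1)) = false := by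
    have := hm.2
    rw [List.length_replicate] at this
    exact matchesAt_single.1 this
  have hrun := stA_run_true y n (2 * (k + 1)) l 0 hs h1
  have hst : stA y (n + 2 * (k + 1) + 1) = pstep (.ok l (2 * k + 2)) false := by
    rw [stA_succ, hrun, h2]
    congr 2
    omega
  rw [show n + (2 * (k + 1) + 1) = n + 2 * (k + 1) + 1 from by omega, hst, pstep_false_2k2]

lemma stA_encode (y : ℕ → Bool) (l₂ : List ℕ) : ∀ (n : ℕ) (l₁ : List ℕ),
    stA y n = .ok l₁ 0 → matchesAt y n (encodeL l₂) →
    stA y (n + (encodeL l₂).length) = .ok (l₁ ++ l₂) 0 := by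
  induction l₂ with
  | nil => intro n l₁ hs _; simpa [encodeL] using hs
  | cons a l₂ ih =>
    intro n l₁ hs hm
    rw [encodeL] at hm ⊢
    rw [matchesAt_append] at hm
    have h1 := stA_block y n l₁ a hs hm.1
    have h2 := ih (n + (goodBlock (a+1)).length) (l₁ ++ [a])
      (by simpa using h1) hm.2
    rw [List.length_append]
    rw [show n + ((goodBlock (a+1)).length + (encodeL l₂).length)
      = n + (goodBlock (a+1)).length + (encodeL l₂).length by omega]
    simpa using h2

lemma stA_mono_bad1 (y : ℕ → Bool) {a b : ℕ} (hab : a ≤ b) (h : stA y a = .bad1) :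
    stA y b = .bad1 := by
  induction b with
  | zero => exact (Nat.le_zero.1 hab) ▸ h
  | succ b ih =>
    rcases Nat.lt_or_ge a (b+1) with hlt | hge
    · rw [stA_succ, ih (by omega)]; simp
    · have : a = b + 1 := by omega
      exact this ▸ h

lemma stA_mono_bad2 (y : ℕ → Bool) {a b : ℕ} (hab : a ≤ b) (h : stA y a = .bad2) :
    stA y b = .bad2 := by
  induction b with
  | zero => exact (Nat.le_zero.1 hab) ▸ h
  | succ b ih =>
    rcases Nat.lt_or_ge a (b+1) with hlt | hge
    · rw [stA_succ, ih (by omega)]; simp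
    · have : a = b + 1 := by omega
      exact this ▸ h

lemma stA_ok_earlier (y : ℕ → Bool) {a b : ℕ} {l r} (hab : a ≤ b) (h : stA y b = .ok l r) :
    ∃ l' r', stA y a = .ok l' r' := by
  rcases ha : stA y a with ⟨l', r'⟩ | _ | _
  · exact ⟨l', r', rfl⟩
  · rw [stA_mono_bad1 y hab ha] at h; exact absurd h (by simp)
  · rw [stA_mono_bad2 y hab ha] at h; exact absurd h (by simp)

lemma pstep_false_ok {l' : List ℕ} {r' : ℕ} {l : List ℕ} {r : ℕ}
    (h : pstep (.ok l' r') false = .ok l r) :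
    r' % 2 = 0 ∧ r' ≠ 0 ∧ l = l' ++ [r' / 2 - 1] ∧ r = 0 := by
  have hd : pstep (.ok l' r') false =
      (if r' % 2 = 1 then (if l'.length % 2 = 0 then PSt.bad2 else PSt.bad1)
       else if r' = 0 then (if l'.length % 2 = 0 then PSt.bad1 else PSt.bad2)
       else PSt.ok (l' ++ [r' / 2 - 1]) 0) := rfl
  rw [hd] at h
  split at h
  · split at h <;> exact PSt.noConfusion h
  · rename_i h1
    split at h
    · split at h <;> exact PSt.noConfusion h
    · rename_i h0
      injection h with h2 h3
      exact ⟨by omega, h0, h2.symm, h3.symm⟩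

lemma stA_spec (y : ℕ → Bool) : ∀ (n : ℕ) (l : List ℕ) (r : ℕ), stA y n = .ok l r →
    n = (encodeL l).length + r ∧ matchesAt y 0 (encodeL l) ∧
      ∀ i < r, y ((encodeL l).length + i) = true := by
  intro n
  induction n with
  | zero =>
    intro l r h
    simp only [stA] at h
    injection h with h1 h2
    subst h1; subst h2
    exact ⟨rfl, fun i hi => by simp [encodeL] at hi, fun i hi => by omega⟩
  | succ n ih =>
    intro l r h
    rw [stA_succ] at h
    rcases hs : stA y n with ⟨l', r'⟩ | _ | _
    · rw [hs] at h
      obtain ⟨hn, hm, ht⟩ := ih l' r' hs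
      cases hy : y n with
      | true =>
        rw [hy, pstep_true] at h
        injection h with h1 h2
        subst h1
        refine ⟨by omega, hm, fun i hi => ?_⟩
        rcases Nat.lt_or_ge i r' with hlt | hge
        · exact ht i hlt
        · have : i = r' := by omega
          subst this
          rw [← hn, hy]
      | false =>
        rw [hy] at h
        obtain ⟨he, h0, hl, hr⟩ := pstep_false_ok h
        subst hl; subst hr
        have hkey : 2 * (r' / 2 - 1 + 1) = r' := by omega
        have hlen : (encodeL (l' ++ [r' / 2 - 1])).length
            = (encodeL l').length + r' + 1 := by
          rw [encodeL_append, List.length_append, goodBlock_length]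
          omega
        refine ⟨by omega, ?_, fun i hi => by omega⟩
        rw [encodeL_append, matchesAt_append]
        refine ⟨hm, ?_⟩
        rw [goodBlock, matchesAt_append]
        constructor
        · rw [matchesAt_replicate_true]
          intro i hi
          rw [Nat.zero_add]
          exact ht i (by omega)
        · rw [List.length_replicate, matchesAt_single, Nat.zero_add, hkey, ← hn, hy]
    · rw [hs] at h; simp at h
    · rw [hs] at h; simp at h

lemma stA_parity (y : ℕ → Bool) {n l r} (h : stA y n = .ok l r) :
    (l.length + r) % 2 = n % 2 := by
  obtain ⟨hn, -, -⟩ := stA_spec y n l r h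
  have := encodeL_length_mod l
  omega

lemma stA_prefix_mono (y : ℕ → Bool) : ∀ (b a : ℕ) (l r l' r'), a ≤ b →
    stA y a = .ok l r → stA y b = .ok l' r' → l <+: l' := by
  intro b
  induction b with
  | zero =>
    intro a l r l' r' hab h h'
    interval_cases a
    rw [h] at h'
    injection h' with h1 h2
    exact h1 ▸ List.prefix_refl l
  | succ b ih =>
    intro a l r l' r' hab h h'
    rcases Nat.lt_or_ge a (b+1) with hlt | hge
    · have hbok : ∃ l'' r'', stA y b = PSt.ok l'' r'' := by
        rcases hb : stA y b with ⟨l0, r0⟩ | _ | _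
        · exact ⟨l0, r0, rfl⟩
        · rw [stA_succ, hb] at h'; simp at h'
        · rw [stA_succ, hb] at h'; simp at h'
      obtain ⟨l'', r'', h''⟩ := hbok
      have hpre : l <+: l'' := ih a l r l'' r'' (by omega) h h''
      rw [stA_succ, h''] at h'
      cases hy : y b with
      | true =>
        rw [hy, pstep_true] at h'
        injection h' with h1 h2
        exact h1 ▸ hpre
      | false =>
        rw [hy] at h'
        obtain ⟨-, -, hl, -⟩ := pstep_false_ok h'
        subst hl
        exact hpre.trans (List.prefix_append _ _)
    · have : a = b + 1 := by omega
      subst this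
      rw [h] at h'
      injection h' with h1 h2
      exact h1 ▸ List.prefix_refl l

lemma pstep_false_bad2_iff {l : List ℕ} {r : ℕ} :
    pstep (.ok l r) false = .bad2 ↔
      ((r % 2 = 1 ∧ l.length % 2 = 0) ∨ (r = 0 ∧ l.length % 2 = 1)) := by
  have hd : pstep (.ok l r) false =
      (if r % 2 = 1 then (if l.length % 2 = 0 then PSt.bad2 else PSt.bad1)
       else if r = 0 then (if l.length % 2 = 0 then PSt.bad1 else PSt.bad2)
       else PSt.ok (l ++ [r / 2 - 1]) 0) := rfl
  rw [hd]
  constructor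
  · intro h
    split at h
    · rename_i h1
      split at h
      · rename_i h2; exact Or.inl ⟨h1, h2⟩
      · exact PSt.noConfusion h
    · rename_i h1
      split at h
      · rename_i h0
        split at h
        · exact PSt.noConfusion h
        · rename_i h2; exact Or.inr ⟨h0, by omega⟩
      · exact PSt.noConfusion h
  · rintro (⟨h1, h2⟩ | ⟨h0, h2⟩)
    · rw [if_pos h1, if_pos h2]
    · rw [if_neg (by omega), if_pos h0, if_neg (by omega)]

lemma pstep_false_bad1_iff {l : List ℕ} {r : ℕ} :
    pstep (.ok l r) false = .bad1 ↔
      ((r % 2 = 1 ∧ l.length % 2 = 1) ∨ (r = 0 ∧ l.length % 2 = 0)) := by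
  have hd : pstep (.ok l r) false =
      (if r % 2 = 1 then (if l.length % 2 = 0 then PSt.bad2 else PSt.bad1)
       else if r = 0 then (if l.length % 2 = 0 then PSt.bad1 else PSt.bad2)
       else PSt.ok (l ++ [r / 2 - 1]) 0) := rfl
  rw [hd]
  constructor
  · intro h
    split at h
    · rename_i h1
      split at h
      · exact PSt.noConfusion h
      · rename_i h2; exact Or.inl ⟨h1, by omega⟩
    · rename_i h1
      split at h
      · rename_i h0
        split at h
        · rename_i h2; exact Or.inr ⟨h0, h2⟩
        · exact PSt.noConfusion h
      · exact PSt.noConfusion h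
  · rintro (⟨h1, h2⟩ | ⟨h0, h2⟩)
    · rw [if_pos h1, if_neg (by omega)]
    · rw [if_neg (by omega), if_pos h0, if_pos h2]

-- bridge between listPrefixOf and matchesAt
lemma listPrefixOf_iff_matchesAt {w : List Bool} {y : ℕ → Bool} :
    listPrefixOf w y ↔ matchesAt y 0 w := by
  unfold listPrefixOf matchesAt
  constructor <;> intro h i hi <;> simpa using h i hi

-- isBlocksCat and encodeL
lemma isBlocksCat_encodeL (l : List ℕ) : isBlocksCat l.length (encodeL l) := by
  induction l with
  | nil => simp [isBlocksCat, encodeL]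
  | cons a l ih =>
    exact ⟨a + 1, by omega, encodeL l, rfl, ih⟩

lemma isBlocksCat_exists {m : ℕ} : ∀ {w : List Bool}, isBlocksCat m w →
    ∃ l : List ℕ, l.length = m ∧ w = encodeL l := by
  induction m with
  | zero => intro w h; exact ⟨[], rfl, h⟩
  | succ m ih =>
    intro w h
    obtain ⟨k, hk, w', rfl, hb⟩ := h
    obtain ⟨l, hl, rfl⟩ := ih hb
    refine ⟨(k - 1) :: l, by simp [hl], ?_⟩
    rw [encodeL]
    congr 2
    omega

-- histOf lemmas
@[simp] lemma histOf_length {X : Type*} (x : ℕ → X) (n : ℕ) : (histOf x n).length = n := by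
  simp [histOf]

lemma histOf_succ {X : Type*} (x : ℕ → X) (n : ℕ) :
    histOf x (n + 1) = histOf x n ++ [x n] := by
  rw [histOf, List.ofFn_succ']
  simp [histOf, List.concat_eq_append]

lemma histOf_getD {X : Type*} (x : ℕ → X) (n i : ℕ) (d : X) (h : i < n) :
    (histOf x n).getD i d = x i := by
  rw [List.getD_eq_getElem _ _ (by simpa using h)]
  simp [histOf]

lemma histOf_take {X : Type*} (x : ℕ → X) {m n : ℕ} (h : m ≤ n) :
    (histOf x n).take m = histOf x m := by
  apply List.ext_getElem
  · simp; omega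
  · intro i h1 h2
    simp [histOf]

-- stL
def stL (h : List Bool) : PSt := h.foldl pstep (.ok [] 0)

lemma stL_append (h : List Bool) (b : Bool) : stL (h ++ [b]) = pstep (stL h) b := by
  simp [stL]

lemma stA_eq_stL (y : ℕ → Bool) (n : ℕ) : stA y n = stL (histOf y n) := by
  induction n with
  | zero => rfl
  | succ n ih => rw [stA_succ, histOf_succ, stL_append, ih]

-- cumCat / phiCode bridge
lemma cumCat_prefix {C : Type*} (b : ℕ → List C) {n m : ℕ} (h : n ≤ m) :
    cumCat b n <+: cumCat b m := by
  induction m with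
  | zero => rw [Nat.le_zero.1 h]
  | succ m ih =>
    rcases Nat.lt_or_ge n (m + 1) with hlt | hge
    · exact (ih (by omega)).trans ⟨b m, rfl⟩
    · rw [show n = m + 1 by omega]

lemma getD_of_prefix {l₁ l₂ : List Bool} (h : l₁ <+: l₂) {i : ℕ} (hi : i < l₁.length) :
    l₁.getD i false = l₂.getD i false := by
  obtain ⟨t, rfl⟩ := h
  rw [List.getD_eq_getElem _ _ hi, List.getD_eq_getElem _ _ (by simp; omega),
    List.getElem_append_left hi]

lemma cumCat_encode (ns : ℕ → ℕ) (m : ℕ) :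
    cumCat (fun n => goodBlock (ns n + 1)) m = encodeL (histOf ns m) := by
  induction m with
  | zero => rfl
  | succ m ih => rw [cumCat, ih, histOf_succ, encodeL_append]

lemma cumCat_length_ge (ns : ℕ → ℕ) (m : ℕ) :
    m ≤ (cumCat (fun n => goodBlock (ns n + 1)) m).length := by
  rw [cumCat_encode]
  have := encodeL_length_ge (histOf ns m)
  simpa using this

lemma phiCode_matches (ns : ℕ → ℕ) (m : ℕ) :
    matchesAt (phiCode ns) 0 (encodeL (histOf ns m)) := by
  intro i hi
  rw [Nat.zero_add]
  show _ = (cumCat (fun n => goodBlock (ns n + 1)) (i + 1)).getD i false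
  rw [← cumCat_encode] at hi ⊢
  rcases Nat.le_total (i + 1) m with h | h
  · exact (getD_of_prefix (cumCat_prefix _ h)
      (by have := cumCat_length_ge ns (i + 1); omega)).symm
  · exact getD_of_prefix (cumCat_prefix _ h) hi

lemma stA_phiCode (ns : ℕ → ℕ) (m : ℕ) :
    stA (phiCode ns) (encodeL (histOf ns m)).length = .ok (histOf ns m) 0 := by
  have := stA_encode (phiCode ns) (histOf ns m) 0 [] rfl (phiCode_matches ns m)
  simpa using this

lemma phiCode_false_unbounded (ns : ℕ → ℕ) (n : ℕ) :
    ∃ m ≥ n, phiCode ns m = false := by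
  have hm := phiCode_matches ns (n + 1)
  rw [histOf_succ, encodeL_append, matchesAt_append, goodBlock, matchesAt_append] at hm
  have := matchesAt_single.1 hm.2.2
  refine ⟨0 + (encodeL (histOf ns n)).length + (List.replicate (2 * (ns n + 1)) true).length,
    ?_, this⟩
  have h1 := encodeL_length_ge (histOf ns n)
  simp at h1 ⊢
  omega

-- === membership lemmas via the state machine ===

lemma bad2_mem {y : ℕ → Bool} {n : ℕ} (h : stA y n = .bad2) : y ∈ Dtwo ∪ Dfour := by
  -- find the first time bad2 appears
  have hex : ∃ m, stA y (m + 1) = .bad2 ∧ ∃ l r, stA y m = .ok l r := by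
    induction n with
    | zero => exact absurd h (by simp [stA])
    | succ n ih =>
      rcases hs : stA y n with ⟨l, r⟩ | _ | _
      · exact ⟨n, h, l, r, hs⟩
      · rw [stA_succ, hs] at h; simp at h
      · exact ih hs
  obtain ⟨m, hm, l, r, hs⟩ := hex
  rw [stA_succ, hs] at hm
  have hyf : y m = false := by
    cases hy : y m
    · rfl
    · rw [hy, pstep_true] at hm; exact PSt.noConfusion hm
  rw [hyf] at hm
  obtain ⟨hn, hpre, htr⟩ := stA_spec y m l r hs
  rcases pstep_false_bad2_iff.1 hm with ⟨hr, hl⟩ | ⟨hr, hl⟩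
  · -- Dtwo
    left
    refine ⟨l.length / 2, r / 2, encodeL l, ?_, ?_⟩
    · rw [show 2 * (l.length / 2) = l.length by omega]
      exact isBlocksCat_encodeL l
    · rw [listPrefixOf_iff_matchesAt, matchesAt_append, matchesAt_append]
      refine ⟨⟨hpre, ?_⟩, ?_⟩
      · rw [matchesAt_replicate_true]
        intro i hi
        simp only [Nat.zero_add]
        exact htr i (by omega)
      · rw [matchesAt_single]
        simp only [List.length_append, List.length_replicate, Nat.zero_add]
        rw [show (encodeL l).length + (2 * (r / 2) + 1) = m by omega]
        exact hyf
  · -- Dfour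
    right
    refine ⟨l.length / 2, encodeL l, ?_, ?_⟩
    · rw [show 2 * (l.length / 2) + 1 = l.length by omega]
      exact isBlocksCat_encodeL l
    · rw [listPrefixOf_iff_matchesAt, matchesAt_append]
      refine ⟨hpre, ?_⟩
      rw [matchesAt_single, Nat.zero_add, show (encodeL l).length = m by omega]
      exact hyf

lemma mem_Dtwo_bad2 {y : ℕ → Bool} (h : y ∈ Dtwo) : ∃ n, stA y n = .bad2 := by
  obtain ⟨n, k, w, hb, hp⟩ := h
  obtain ⟨l, hl, rfl⟩ := isBlocksCat_exists hb
  rw [listPrefixOf_iff_matchesAt, matchesAt_append, matchesAt_append] at hp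
  have h1 : stA y (0 + (encodeL l).length) = .ok l 0 :=
    stA_encode y l 0 [] rfl (by simpa using hp.1.1)
  have h2 : stA y (0 + (encodeL l).length + (2 * k + 1)) = .ok l (0 + (2 * k + 1)) := by
    refine stA_run_true y _ _ l 0 h1 (fun i hi => ?_)
    have := matchesAt_replicate_true.1 hp.1.2
    exact this i (by omega)
  refine ⟨0 + (encodeL l).length + (2 * k + 1) + 1, ?_⟩
  rw [stA_succ, h2]
  have hyf : y (0 + (encodeL l).length + (2 * k + 1)) = false := by
    have := matchesAt_single.1 hp.2
    simpa [List.length_replicate] using this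
  rw [hyf]
  exact pstep_false_bad2_iff.2 (Or.inl ⟨by omega, by omega⟩)

lemma mem_Dfour_bad2 {y : ℕ → Bool} (h : y ∈ Dfour) : ∃ n, stA y n = .bad2 := by
  obtain ⟨n, w, hb, hp⟩ := h
  obtain ⟨l, hl, rfl⟩ := isBlocksCat_exists hb
  rw [listPrefixOf_iff_matchesAt, matchesAt_append] at hp
  have h1 : stA y (0 + (encodeL l).length) = .ok l 0 :=
    stA_encode y l 0 [] rfl (by simpa using hp.1)
  refine ⟨0 + (encodeL l).length + 1, ?_⟩
  rw [stA_succ, h1, matchesAt_single.1 hp.2]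
  exact pstep_false_bad2_iff.2 (Or.inr ⟨rfl, by omega⟩)

lemma tailTrue_odd_mem_D3 {y : ℕ → Bool} {n : ℕ} {l : List ℕ} {r : ℕ}
    (hs : stA y n = .ok l r) (hlen : l.length % 2 = 1) (ht : ∀ i ≥ n, y i = true) :
    y ∈ Dthree := by
  obtain ⟨hn, hpre, htr⟩ := stA_spec y n l r hs
  refine ⟨l.length / 2, encodeL l, ?_, listPrefixOf_iff_matchesAt.2 hpre, fun i hi => ?_⟩
  · rw [show 2 * (l.length / 2) + 1 = l.length by omega]
    exact isBlocksCat_encodeL l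
  · rcases Nat.lt_or_ge i n with hlt | hge
    · have := htr (i - (encodeL l).length) (by omega)
      rwa [show (encodeL l).length + (i - (encodeL l).length) = i by omega] at this
    · exact ht i hge

lemma mem_D3_states {y : ℕ → Bool} (h : y ∈ Dthree) :
    ∃ l : List ℕ, l.length % 2 = 1 ∧ ∀ j, stA y ((encodeL l).length + j) = .ok l j := by
  obtain ⟨n, w, hb, hp, ht⟩ := h
  obtain ⟨l, hl, rfl⟩ := isBlocksCat_exists hb
  rw [listPrefixOf_iff_matchesAt] at hp
  have h1 : stA y (0 + (encodeL l).length) = .ok l 0 := stA_encode y l 0 [] rfl hp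
  refine ⟨l, by omega, fun j => ?_⟩
  have := stA_run_true y ((encodeL l).length) j l 0 (by simpa using h1)
    (fun i hi => ht _ (by omega))
  simpa using this

lemma phiCode_states_ok (ns : ℕ → ℕ) (n : ℕ) :
    ∃ l r, stA (phiCode ns) n = .ok l r := by
  have h1 := stA_phiCode ns n
  have h2 : n ≤ (encodeL (histOf ns n)).length := by
    have := encodeL_length_ge (histOf ns n); simpa using this
  exact stA_ok_earlier (phiCode ns) h2 h1

lemma phiCode_inj {ns ns' : ℕ → ℕ} (h : phiCode ns = phiCode ns') : ns = ns' := by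
  funext j
  have h1 := stA_phiCode ns (j + 1)
  have h2 := stA_phiCode ns' (j + 1)
  rw [h] at h1
  have heq : histOf ns (j + 1) = histOf ns' (j + 1) := by
    rcases Nat.le_total (encodeL (histOf ns (j+1))).length (encodeL (histOf ns' (j+1))).length
      with hab | hab
    · exact List.IsPrefix.eq_of_length
        (stA_prefix_mono (phiCode ns') _ _ _ _ _ _ hab h1 h2) (by simp)
    · exact (List.IsPrefix.eq_of_length
        (stA_prefix_mono (phiCode ns') _ _ _ _ _ _ hab h2 h1) (by simp)).symm
  have h3 := congrArg (fun t => t.getD j 0) heq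
  rwa [histOf_getD _ _ _ _ (by omega), histOf_getD _ _ _ _ (by omega)] at h3

lemma phiCode_not_D3 (ns : ℕ → ℕ) : phiCode ns ∉ Dthree := by
  intro h
  obtain ⟨n, w, hb, hp, ht⟩ := h
  obtain ⟨m, hm, hf⟩ := phiCode_false_unbounded ns w.length
  rw [ht m hm] at hf
  exact Bool.noConfusion hf

lemma phiCode_not_bad (ns : ℕ → ℕ) (n : ℕ) :
    stA (phiCode ns) n ≠ .bad1 ∧ stA (phiCode ns) n ≠ .bad2 := by
  obtain ⟨l, r, h⟩ := phiCode_states_ok ns n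
  rw [h]
  exact ⟨by simp, by simp⟩

lemma phiCode_not_D2D4 (ns : ℕ → ℕ) : phiCode ns ∉ Dtwo ∧ phiCode ns ∉ Dfour := by
  constructor <;> intro h
  · obtain ⟨n, hn⟩ := mem_Dtwo_bad2 h
    exact (phiCode_not_bad ns n).2 hn
  · obtain ⟨n, hn⟩ := mem_Dfour_bad2 h
    exact (phiCode_not_bad ns n).2 hn

lemma bad1_not_mem {y : ℕ → Bool} {n : ℕ} (h : stA y n = .bad1) (L : Set (ℕ → ℕ)) :
    y ∉ phiCode '' L ∪ Dtwo ∪ Dthree ∪ Dfour := by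
  intro hy
  have hbad2 : (∃ m, stA y m = .bad2) → False := by
    rintro ⟨m, hm⟩
    rcases Nat.le_total n m with hnm | hmn
    · rw [stA_mono_bad1 y hnm h] at hm; exact PSt.noConfusion hm
    · rw [stA_mono_bad2 y hmn hm] at h; exact PSt.noConfusion h
  rcases hy with ((⟨ns, _, rfl⟩ | h2) | h3) | h4
  · exact ((phiCode_not_bad ns n).1) h
  · exact hbad2 (mem_Dtwo_bad2 h2)
  · obtain ⟨l, hl, hst⟩ := mem_D3_states h3
    have := hst n
    rw [stA_mono_bad1 y (by omega) h] at this
    exact PSt.noConfusion this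
  · exact hbad2 (mem_Dfour_bad2 h4)

lemma tailTrue_even_not_mem {y : ℕ → Bool} {n : ℕ} {l : List ℕ} {r : ℕ}
    (hs : stA y n = .ok l r) (hlen : l.length % 2 = 0) (ht : ∀ i ≥ n, y i = true)
    (L : Set (ℕ → ℕ)) :
    y ∉ phiCode '' L ∪ Dtwo ∪ Dthree ∪ Dfour := by
  intro hy
  have hrun : ∀ j, stA y (n + j) = .ok l (r + j) :=
    fun j => stA_run_true y n j l r hs (fun i hi => ht _ (by omega))
  have hbad2 : (∃ m, stA y m = .bad2) → False := by
    rintro ⟨m, hm⟩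
    have := stA_mono_bad2 y (show m ≤ n + m by omega) hm
    rw [hrun m] at this
    exact PSt.noConfusion this
  rcases hy with ((⟨ns, _, hns⟩ | h2) | h3) | h4
  · obtain ⟨m, hm, hf⟩ := phiCode_false_unbounded ns n
    rw [hns] at hf
    rw [ht m hm] at hf
    exact Bool.noConfusion hf
  · exact hbad2 (mem_Dtwo_bad2 h2)
  · obtain ⟨l', hl', hst⟩ := mem_D3_states h3
    have h1 := hrun (encodeL l').length
    have h2 := hst n
    rw [show (encodeL l').length + n = n + (encodeL l').length by omega] at h2
    rw [h1] at h2
    injection h2 with e1 e2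
    rw [e1] at hlen
    omega
  · exact hbad2 (mem_Dfour_bad2 h4)

lemma phiCode_mem_iff (ns : ℕ → ℕ) (L : Set (ℕ → ℕ)) :
    phiCode ns ∈ phiCode '' L ∪ Dtwo ∪ Dthree ∪ Dfour ↔ ns ∈ L := by
  constructor
  · rintro (((⟨ns', hns', he⟩ | h2) | h3) | h4)
    · rwa [← phiCode_inj he]
    · exact absurd h2 (phiCode_not_D2D4 ns).1
    · exact absurd h3 (phiCode_not_D3 ns)
    · exact absurd h4 (phiCode_not_D2D4 ns).2
  · intro h
    exact Or.inl (Or.inl (Or.inl ⟨ns, h, rfl⟩))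

-- small getD helpers
lemma getD_append_lt {α : Type*} (l t : List α) {j : ℕ} (hj : j < l.length) (d : α) :
    (l ++ t).getD j d = l.getD j d := by
  rw [List.getD_eq_getElem _ _ (by simp; omega), List.getElem_append_left hj,
    List.getD_eq_getElem _ _ hj]

lemma getD_append_last {α : Type*} (l : List α) (a d : α) :
    (l ++ [a]).getD l.length d = a := by
  rw [List.getD_eq_getElem _ _ (by simp), List.getElem_append_right (Nat.le_refl _)]
  simp

-- === strategies coded into the binary game ===

def respOf (p : ℕ) (s : List ℕ → ℕ) : PSt → Bool
  | .ok l r => if l.length % 2 = p ∧ r = 2 * s l + 2 then false else true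
  | _ => true

def bstrat (p : ℕ) (s : List ℕ → ℕ) (h : List Bool) : Bool := respOf p s (stL h)

lemma bstrat_eval (p : ℕ) (s : List ℕ → ℕ) (x : ℕ → Bool) (n : ℕ) :
    bstrat p s (histOf x n) = respOf p s (stA x n) := by
  rw [bstrat, stA_eq_stL]

def badOf (p : ℕ) : PSt := if p = 0 then .bad1 else .bad2

lemma ok_ne_badOf (l : List ℕ) (r p : ℕ) : PSt.ok l r ≠ badOf p := by
  unfold badOf; split <;> simp

lemma badOf_eq_bad1 {p : ℕ} (hp : p < 2) : badOf p = .bad1 ↔ p = 0 := by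
  unfold badOf; split <;> simp_all

lemma badOf_eq_bad2 {p : ℕ} (hp : p < 2) : badOf p = .bad2 ↔ p = 1 := by
  unfold badOf; split <;> simp_all <;> omega

lemma pstep_false_def (l : List ℕ) (r : ℕ) : pstep (.ok l r) false =
    (if r % 2 = 1 then (if l.length % 2 = 0 then PSt.bad2 else PSt.bad1)
     else if r = 0 then (if l.length % 2 = 0 then PSt.bad1 else PSt.bad2)
     else PSt.ok (l ++ [r / 2 - 1]) 0) := rfl

lemma bstrat_inv (p : ℕ) (hp : p < 2) (s : List ℕ → ℕ) (x : ℕ → Bool)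
    (hfol : ∀ n, n % 2 = p → x n = bstrat p s (histOf x n)) :
    ∀ n, stA x n ≠ badOf p ∧ ∀ l r, stA x n = .ok l r →
      (l.length % 2 = p → r ≤ 2 * s l + 2) ∧
      (∀ j, j < l.length → j % 2 = p → l.getD j 0 = s (l.take j)) := by
  intro n
  induction n with
  | zero =>
    refine ⟨?_, ?_⟩
    · have h0 : stA x 0 = PSt.ok [] 0 := rfl
      rw [h0]
      exact ok_ne_badOf [] 0 p
    intro l r h
    simp only [stA] at h
    injection h with h1 h2
    subst h1; subst h2
    exact ⟨fun _ => by omega, fun j hj _ => by simp at hj⟩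
  | succ n ih =>
    rcases hs : stA x n with ⟨l, r⟩ | _ | _
    case bad1 =>
      have hb1 : stA x (n+1) = PSt.bad1 := by rw [stA_succ, hs]; simp
      rw [hb1]
      refine ⟨?_, fun l r h => absurd h (by simp)⟩
      have h1 := ih.1
      rw [hs] at h1
      exact h1
    case bad2 =>
      have hb2 : stA x (n+1) = PSt.bad2 := by rw [stA_succ, hs]; simp
      rw [hb2]
      refine ⟨?_, fun l r h => absurd h (by simp)⟩
      have h1 := ih.1
      rw [hs] at h1
      exact h1
    case ok =>
      have hpar := stA_parity x hs
      obtain ⟨hbound, hfollow⟩ := ih.2 l r hs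
      cases hxv : x n with
      | true =>
        have hst : stA x (n+1) = .ok l (r+1) := by rw [stA_succ, hs, hxv, pstep_true]
        rw [hst]
        refine ⟨ok_ne_badOf _ _ _, ?_⟩
        intro l' r' h
        injection h with e1 e2
        subst e1
        subst e2
        refine ⟨?_, hfollow⟩
        intro hlp
        have hb := hbound hlp
        rcases eq_or_ne (n % 2) p with hnp | hnp
        · have hx := hfol n hnp
          rw [bstrat_eval, hs] at hx
          rw [hxv] at hx
          by_cases hcond : l.length % 2 = p ∧ r = 2 * s l + 2
          · rw [show respOf p s (.ok l r) = false from by simp [respOf, hcond]] at hx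
            exact Bool.noConfusion hx
          · have : r ≠ 2 * s l + 2 := fun hr => hcond ⟨hlp, hr⟩
            omega
        · omega
      | false =>
        rcases eq_or_ne (n % 2) p with hnp | hnp
        · -- our player wrote false, so the strategy condition held
          have hx := hfol n hnp
          rw [bstrat_eval, hs, hxv] at hx
          by_cases hcond : l.length % 2 = p ∧ r = 2 * s l + 2
          · obtain ⟨hlp, hr⟩ := hcond
            have hst : stA x (n+1) = .ok (l ++ [s l]) 0 := by
              rw [stA_succ, hs, hxv, hr, pstep_false_2k2]
            rw [hst]
            refine ⟨ok_ne_badOf _ _ _, ?_⟩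
            intro l' r' h
            injection h with e1 e2
            subst e1
            subst e2
            refine ⟨fun _ => by omega, ?_⟩
            intro j hj hjp
            simp only [List.length_append, List.length_singleton] at hj
            rcases Nat.lt_or_ge j l.length with hlt | hge
            · rw [getD_append_lt l [s l] hlt, List.take_append_of_le_length (by omega)]
              exact hfollow j hlt hjp
            · have hj' : j = l.length := by omega
              subst hj'
              rw [getD_append_last, List.take_append_of_le_length (Nat.le_refl _),
                List.take_length]
          · rw [show respOf p s (.ok l r) = true from by simp [respOf]; tauto] at hx
            exact Bool.noConfusion hx
        · -- opponent wrote false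
          have hst : stA x (n+1) = pstep (.ok l r) false := by rw [stA_succ, hs, hxv]
          rw [hst, pstep_false_def]
          split
          · rename_i hr1
            split
            · rename_i hle
              refine ⟨?_, fun l' r' h => absurd h (by simp)⟩
              intro hc
              have := (badOf_eq_bad2 hp).1 hc.symm
              omega
            · rename_i hlo
              refine ⟨?_, fun l' r' h => absurd h (by simp)⟩
              intro hc
              have := (badOf_eq_bad1 hp).1 hc.symm
              omega
          · rename_i hr1
            split
            · rename_i hr0
              split
              · rename_i hle
                refine ⟨?_, fun l' r' h => absurd h (by simp)⟩
                intro hc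
                have := (badOf_eq_bad1 hp).1 hc.symm
                omega
              · rename_i hlo
                refine ⟨?_, fun l' r' h => absurd h (by simp)⟩
                intro hc
                have := (badOf_eq_bad2 hp).1 hc.symm
                omega
            · rename_i hr0
              refine ⟨ok_ne_badOf _ _ _, ?_⟩
              intro l' r' h
              injection h with e1 e2
              subst e1
              subst e2
              refine ⟨fun _ => by omega, ?_⟩
              intro j hj hjp
              simp only [List.length_append, List.length_singleton] at hj
              rcases Nat.lt_or_ge j l.length with hlt | hge
              · rw [getD_append_lt l _ hlt, List.take_append_of_le_length (by omega)]
                exact hfollow j hlt hjp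
              · exfalso
                -- j = l.length, j % 2 = p, but then parity forces n % 2 = p
                omega

lemma getD_of_prefix_gen {α : Type*} {l₁ l₂ : List α} (h : l₁ <+: l₂) {i : ℕ}
    (hi : i < l₁.length) (d : α) : l₁.getD i d = l₂.getD i d := by
  obtain ⟨t, rfl⟩ := h
  exact (getD_append_lt l₁ t hi d).symm

lemma bstrat_outcome (p : ℕ) (hp : p < 2) (s : List ℕ → ℕ) (x : ℕ → Bool)
    (hfol : ∀ n, n % 2 = p → x n = bstrat p s (histOf x n)) :
    (∃ n, stA x n = badOf (1 - p)) ∨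
    (∃ n l r, stA x n = .ok l r ∧ l.length % 2 ≠ p ∧ ∀ i ≥ n, x i = true) ∨
    (∃ ns : ℕ → ℕ, x = phiCode ns ∧ ∀ m, m % 2 = p → ns m = s (histOf ns m)) := by
  have hinv := bstrat_inv p hp s x hfol
  by_cases hallok : ∀ n, ∃ l r, stA x n = .ok l r
  · by_cases htail : ∃ n, ∀ i ≥ n, x i = true
    · obtain ⟨n, ht⟩ := htail
      obtain ⟨l, r, hs⟩ := hallok n
      refine Or.inr (Or.inl ⟨n, l, r, hs, ?_, ht⟩)
      intro hlp
      have hrun : ∀ j, stA x (n + j) = .ok l (r + j) :=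
        fun j => stA_run_true x n j l r hs (fun i _ => ht _ (by omega))
      have h2 := (hinv (n + (2 * s l + 3))).2 l (r + (2 * s l + 3)) (hrun _)
      have hb := h2.1 hlp
      omega
    · push_neg at htail
      have hgrow : ∀ j, ∃ n l, stA x n = .ok l 0 ∧ j ≤ l.length := by
        intro j
        induction j with
        | zero => exact ⟨0, [], rfl, by omega⟩
        | succ j ihj =>
          obtain ⟨n, l, hs, hlen⟩ := ihj
          have hex : ∃ k, x (n + k) = false := by
            obtain ⟨i, hi, hxi⟩ := htail n
            exact ⟨i - n, by rw [show n + (i - n) = i by omega]; simpa using hxi⟩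
          set k := Nat.find hex with hk
          have hkf : x (n + k) = false := Nat.find_spec hex
          have hklt : ∀ i < k, x (n + i) = true := fun i hik => by
            have := Nat.find_min hex hik
            simpa using this
          have hrun := stA_run_true x n k l 0 hs hklt
          obtain ⟨l', r', hs'⟩ := hallok (n + k + 1)
          have hps : pstep (.ok l (0 + k)) false = .ok l' r' := by
            rw [← hkf, ← hrun, ← stA_succ]
            exact hs'
          obtain ⟨he, h0, hl, hr⟩ := pstep_false_ok hps
          subst hr
          refine ⟨n + k + 1, l', hs', ?_⟩
          subst hl
          simp
          omega
      choose N Ls hLs hlen using hgrow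
      set ns : ℕ → ℕ := fun j => (Ls (j + 1)).getD j 0 with hns
      have hcompat : ∀ n l r, stA x n = .ok l r → ∀ j, j < l.length → l.getD j 0 = ns j := by
        intro n l r hst j hj
        have h2 := hLs (j + 1)
        rcases Nat.le_total n (N (j + 1)) with hab | hab
        · have hpre := stA_prefix_mono x _ _ _ _ _ _ hab hst h2
          exact getD_of_prefix_gen hpre hj 0
        · have hpre := stA_prefix_mono x _ _ _ _ _ _ hab h2 hst
          exact (getD_of_prefix_gen hpre (by have := hlen (j + 1); omega) 0).symm
      have hlform : ∀ j, Ls j = histOf ns (Ls j).length := by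
        intro j
        apply List.ext_getElem (by simp)
        intro i h1 h2
        have h3 := hcompat _ _ _ (hLs j) i h1
        rw [List.getD_eq_getElem _ _ h1] at h3
        rw [h3]
        simp [histOf]
      have hx : x = phiCode ns := by
        funext i
        have hLi := hLs (i + 1)
        have hleni := hlen (i + 1)
        set l := Ls (i + 1) with hldef
        have hilen : i < (encodeL l).length := by
          have := encodeL_length_ge l
          omega
        have hspec := (stA_spec x _ _ _ hLi).2.1
        have h1 : x i = (encodeL l).getD i false := by
          have := hspec i hilen
          rw [Nat.zero_add] at this
          exact this.symm
        have h2 : phiCode ns i = (encodeL (histOf ns l.length)).getD i false := by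
          have := phiCode_matches ns l.length i (by rw [← hlform]; exact hilen)
          rw [Nat.zero_add] at this
          exact this.symm
        rw [h1, h2, ← hlform]
      refine Or.inr (Or.inr ⟨ns, hx, ?_⟩)
      intro m hm
      have h2 := hLs (m + 1)
      have hlenm := hlen (m + 1)
      have hfolm := ((hinv (N (m + 1))).2 _ _ h2).2 m (by omega) hm
      have h3 : (Ls (m + 1)).getD m 0 = ns m := hcompat _ _ _ h2 m (by omega)
      rw [h3] at hfolm
      rw [hlform (m + 1), histOf_take ns (m := m) (n := (Ls (m + 1)).length) (by omega)] at hfolm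
      exact hfolm
  · push_neg at hallok
    obtain ⟨n, hbad⟩ := hallok
    left
    rcases hsn : stA x n with ⟨l, r⟩ | _ | _
    · exact absurd hsn (hbad l r)
    · refine ⟨n, ?_⟩
      rw [hsn]
      have h1 := (hinv n).1
      rw [hsn] at h1
      have hp1 : p = 1 := by
        by_contra hc
        have hp0 : p = 0 := by omega
        exact h1 (by rw [hp0]; rfl)
      rw [show (1 - p) = 0 by omega]
      rfl
    · refine ⟨n, ?_⟩
      rw [hsn]
      have h1 := (hinv n).1
      rw [hsn] at h1
      have hp0 : p = 0 := by
        by_contra hc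
        have hp1 : p = 1 := by omega
        exact h1 (by rw [hp1]; rfl)
      rw [show (1 - p) = 1 by omega]
      rfl

-- === directions A and C ===

lemma directionA (L : Set (ℕ → ℕ)) (σ : List ℕ → ℕ) (hσ : P1Winning L σ) :
    P1Winning (phiCode '' L ∪ Dtwo ∪ Dthree ∪ Dfour) (bstrat 0 σ) := by
  intro x hx
  have hfol : ∀ n, n % 2 = 0 → x n = bstrat 0 σ (histOf x n) := by
    intro n hn
    have := hx (n / 2)
    rwa [show 2 * (n / 2) = n by omega] at this
  rcases bstrat_outcome 0 (by omega) σ x hfol with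
    ⟨n, hb⟩ | ⟨n, l, r, hs, hlp, ht⟩ | ⟨ns, hxe, hfol2⟩
  · have hb2 : stA x n = .bad2 := by rw [hb]; rfl
    rcases bad2_mem hb2 with h | h
    · exact Or.inl (Or.inl (Or.inr h))
    · exact Or.inr h
  · exact Or.inl (Or.inr (tailTrue_odd_mem_D3 hs (by omega) ht))
  · have hns : P1Follows σ ns := fun n => hfol2 (2 * n) (by omega)
    subst hxe
    exact Or.inl (Or.inl (Or.inl ⟨ns, hσ ns hns, rfl⟩))

lemma directionC (L : Set (ℕ → ℕ)) (τ : List ℕ → ℕ) (hτ : P2Winning L τ) :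
    P2Winning (phiCode '' L ∪ Dtwo ∪ Dthree ∪ Dfour) (bstrat 1 τ) := by
  intro x hx hmem
  have hfol : ∀ n, n % 2 = 1 → x n = bstrat 1 τ (histOf x n) := by
    intro n hn
    have := hx ((n - 1) / 2)
    rwa [show 2 * ((n - 1) / 2) + 1 = n by omega] at this
  rcases bstrat_outcome 1 (by omega) τ x hfol with
    ⟨n, hb⟩ | ⟨n, l, r, hs, hlp, ht⟩ | ⟨ns, hxe, hfol2⟩
  · have hb1 : stA x n = .bad1 := by rw [hb]; rfl
    exact bad1_not_mem hb1 L hmem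
  · exact tailTrue_even_not_mem hs (by omega) ht L hmem
  · have hns : P2Follows τ ns := fun n => hfol2 (2 * n + 1) (by omega)
    subst hxe
    exact hτ ns hns ((phiCode_mem_iff ns L).1 hmem)

-- === the simulation for directions B and D ===

def envS (e : ℕ → ℕ) : List ℕ → ℕ := fun l => e (l.length / 2)

def simH (p : ℕ) (s' : List Bool → Bool) (e : ℕ → ℕ) : ℕ → List Bool
  | 0 => []
  | n + 1 =>
      simH p s' e n ++
        [if n % 2 = p then bstrat p (envS e) (simH p s' e n) else s' (simH p s' e n)]

def simB (p : ℕ) (s' : List Bool → Bool) (e : ℕ → ℕ) (n : ℕ) : Bool :=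
  (simH p s' e (n + 1)).getD n true

lemma simH_succ (p : ℕ) (s' : List Bool → Bool) (e : ℕ → ℕ) (n : ℕ) :
    simH p s' e (n + 1) = simH p s' e n ++
      [if n % 2 = p then bstrat p (envS e) (simH p s' e n) else s' (simH p s' e n)] := rfl

@[simp] lemma simH_length (p : ℕ) (s' : List Bool → Bool) (e : ℕ → ℕ) (n : ℕ) :
    (simH p s' e n).length = n := by
  induction n with
  | zero => rfl
  | succ n ih => rw [simH_succ]; simp [ih]

lemma simB_val (p : ℕ) (s' : List Bool → Bool) (e : ℕ → ℕ) (n : ℕ) :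
    simB p s' e n =
      if n % 2 = p then bstrat p (envS e) (simH p s' e n) else s' (simH p s' e n) := by
  rw [simB, simH_succ]
  have := getD_append_last (simH p s' e n)
    (if n % 2 = p then bstrat p (envS e) (simH p s' e n) else s' (simH p s' e n)) true
  rwa [simH_length] at this

lemma simB_histOf (p : ℕ) (s' : List Bool → Bool) (e : ℕ → ℕ) (n : ℕ) :
    histOf (simB p s' e) n = simH p s' e n := by
  induction n with
  | zero => rfl
  | succ n ih => rw [histOf_succ, simH_succ, ih, simB_val]

lemma simB_fol_env (p : ℕ) (s' : List Bool → Bool) (e : ℕ → ℕ) :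
    ∀ n, n % 2 = p → simB p s' e n = bstrat p (envS e) (histOf (simB p s' e) n) := by
  intro n hn
  rw [simB_histOf, simB_val, if_pos hn]

lemma simB_fol_str (p : ℕ) (s' : List Bool → Bool) (e : ℕ → ℕ) :
    ∀ n, n % 2 ≠ p → simB p s' e n = s' (histOf (simB p s' e) n) := by
  intro n hn
  rw [simB_histOf, simB_val, if_neg hn]

lemma simH_congr (p : ℕ) (s' : List Bool → Bool) (e e' : ℕ → ℕ) (m : ℕ)
    (he : ∀ j, 2 * j + p ≤ m → e j = e' j) :
    ∀ n, (∀ t < n, ∀ l r, stA (simB p s' e) t = .ok l r → l.length ≤ m) →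
      simH p s' e n = simH p s' e' n := by
  intro n
  induction n with
  | zero => intro _; rfl
  | succ n ih =>
    intro hcond
    have hih := ih (fun t ht => hcond t (by omega))
    have hmove : (if n % 2 = p then bstrat p (envS e) (simH p s' e n) else s' (simH p s' e n))
        = (if n % 2 = p then bstrat p (envS e') (simH p s' e' n) else s' (simH p s' e' n)) := by
      rw [← hih]
      by_cases hn : n % 2 = p
      · rw [if_pos hn, if_pos hn, bstrat, bstrat]
        have hst : stL (simH p s' e n) = stA (simB p s' e) n := by
          rw [← simB_histOf, ← stA_eq_stL]
        rw [hst]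
        rcases hs : stA (simB p s' e) n with ⟨l, r⟩ | _ | _
        · have hlen := hcond n (by omega) l r hs
          by_cases hl : l.length % 2 = p
          · have hee : e (l.length / 2) = e' (l.length / 2) := he _ (by omega)
            simp only [respOf, envS, hee]
            congr
          · simp [respOf, envS, hl]
        · rfl
        · rfl
      · rw [if_neg hn, if_neg hn]
    rw [simH_succ, simH_succ, hmove, hih]

lemma stA_congr {y y' : ℕ → Bool} {n : ℕ} (h : ∀ i < n, y i = y' i) : stA y n = stA y' n := by
  induction n with
  | zero => rfl
  | succ n ih =>
    rw [stA_succ, stA_succ, ih (fun i hi => h i (by omega)), h n (by omega)]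

open Classical in
noncomputable def extr (p : ℕ) (s' : List Bool → Bool) (l : List ℕ) : ℕ :=
  if h : ∃ v : ℕ, ∃ n ln rn, stA (simB p s' (fun j => l.getD (2 * j + p) 0)) n = .ok ln rn ∧
      l.length < ln.length ∧ ln.getD l.length 0 = v
  then h.choose else 0

lemma extr_spec (p : ℕ) (s' : List Bool → Bool) (l : List ℕ) {n : ℕ} {ln : List ℕ} {rn : ℕ}
    (hst : stA (simB p s' (fun j => l.getD (2 * j + p) 0)) n = .ok ln rn)
    (hlen : l.length < ln.length) : extr p s' l = ln.getD l.length 0 := by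
  set y := simB p s' (fun j => l.getD (2 * j + p) 0) with hy
  have hex : ∃ v : ℕ, ∃ n' ln' rn', stA y n' = .ok ln' rn' ∧
      l.length < ln'.length ∧ ln'.getD l.length 0 = v :=
    ⟨ln.getD l.length 0, n, ln, rn, hst, hlen, rfl⟩
  rw [extr, dif_pos hex]
  obtain ⟨n', ln', rn', hst', hlen', hv⟩ := hex.choose_spec
  rw [← hv]
  rcases Nat.le_total n n' with hab | hab
  · exact (getD_of_prefix_gen (stA_prefix_mono y _ _ _ _ _ _ hab hst hst') hlen 0).symm
  · exact getD_of_prefix_gen (stA_prefix_mono y _ _ _ _ _ _ hab hst' hst) hlen' 0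

lemma sim_analysis (p : ℕ) (hp : p < 2) (s' : List Bool → Bool) (e : ℕ → ℕ) :
    (∃ n, stA (simB p s' e) n = badOf (1 - p)) ∨
    (∃ n l r, stA (simB p s' e) n = .ok l r ∧ l.length % 2 ≠ p ∧
      ∀ i ≥ n, simB p s' e i = true) ∨
    (∃ ns, simB p s' e = phiCode ns ∧ ∀ m, m % 2 = p → ns m = e (m / 2)) := by
  rcases bstrat_outcome p hp (envS e) (simB p s' e) (simB_fol_env p s' e) with
    h | h | ⟨ns, hphi, hfol⟩
  · exact Or.inl h
  · exact Or.inr (Or.inl h)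
  · refine Or.inr (Or.inr ⟨ns, hphi, fun m hm => ?_⟩)
    have := hfol m hm
    rwa [envS, histOf_length] at this

lemma extr_eq (p : ℕ) (hp : p < 2) (s' : List Bool → Bool) (x : ℕ → ℕ) (ns : ℕ → ℕ)
    (hphi : simB p s' (fun j => x (2 * j + p)) = phiCode ns) (m : ℕ) (hm : m % 2 ≠ p) :
    extr p s' (histOf x m) = ns m := by
  set e : ℕ → ℕ := fun j => x (2 * j + p) with hedef
  set el : ℕ → ℕ := fun j => (histOf x m).getD (2 * j + p) 0 with heldef
  set y := simB p s' e with hydef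
  set yl := simB p s' el with hyldef
  set T := (encodeL (histOf ns (m + 1))).length with hT
  have hyT : stA y T = .ok (histOf ns (m + 1)) 0 := by
    rw [hphi]
    exact stA_phiCode ns (m + 1)
  have hcond : ∀ t < T, ∀ l r, stA y t = .ok l r → l.length ≤ m := by
    intro t ht l r hst
    have hpre := stA_prefix_mono y _ _ _ _ _ _ (Nat.le_of_lt ht) hst hyT
    have hle : l.length ≤ m + 1 := by
      have := hpre.length_le
      simpa using this
    by_contra hgt
    have hlen : l.length = m + 1 := by omega
    have heq : l = histOf ns (m + 1) := List.IsPrefix.eq_of_length hpre (by simp [hlen])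
    subst heq
    obtain ⟨ht2, -, -⟩ := stA_spec y t _ _ hst
    omega
  have he : ∀ j, 2 * j + p ≤ m → e j = el j := by
    intro j hj
    have hlt : 2 * j + p < m := by omega
    simp only [heldef, hedef]
    rw [histOf_getD x m _ 0 hlt]
  have hylval : ∀ i < T, yl i = y i := by
    intro i hi
    have hHeq : simH p s' e (i + 1) = simH p s' el (i + 1) :=
      simH_congr p s' e el m he (i + 1) (fun t ht => hcond t (by omega))
    rw [hyldef, hydef, simB, simB, hHeq]
  have hylT : stA yl T = .ok (histOf ns (m + 1)) 0 := by
    rw [stA_congr hylval]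
    exact hyT
  have hres := extr_spec p s' (histOf x m) hylT (by simp)
  rw [hres, histOf_length, histOf_getD ns (m + 1) m 0 (by omega)]

lemma directionB (L : Set (ℕ → ℕ)) (σ' : List Bool → Bool)
    (hσ' : P1Winning (phiCode '' L ∪ Dtwo ∪ Dthree ∪ Dfour) σ') :
    P1Winning L (extr 1 σ') := by
  intro x hx
  set e : ℕ → ℕ := fun j => x (2 * j + 1) with hedef
  set y := simB 1 σ' e with hydef
  have hyL : y ∈ phiCode '' L ∪ Dtwo ∪ Dthree ∪ Dfour := by
    refine hσ' y (fun n => ?_)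
    exact simB_fol_str 1 σ' e (2 * n) (by omega)
  rcases sim_analysis 1 (by omega) σ' e with
    ⟨n, hb⟩ | ⟨n, l, r, hs, hlp, ht⟩ | ⟨ns, hphi, hfol2⟩
  · exact absurd hyL (bad1_not_mem (show stA y n = .bad1 by rw [hb]; rfl) L)
  · exact absurd hyL (tailTrue_even_not_mem hs (by omega) ht L)
  · have hnsL : ns ∈ L := (phiCode_mem_iff ns L).1 (by rw [← hphi]; exact hyL)
    have hxeq : x = ns := by
      funext m
      by_cases hm : m % 2 = 1
      · have h2 := hfol2 m hm
        rw [h2, hedef]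
        show x m = x (2 * (m / 2) + 1)
        congr 1
        omega
      · have h1 := hx (m / 2)
        rw [show 2 * (m / 2) = m by omega] at h1
        rw [h1]
        exact extr_eq 1 (by omega) σ' x ns hphi m (by omega)
    rw [hxeq]
    exact hnsL

lemma directionD (L : Set (ℕ → ℕ)) (τ' : List Bool → Bool)
    (hτ' : P2Winning (phiCode '' L ∪ Dtwo ∪ Dthree ∪ Dfour) τ') :
    P2Winning L (extr 0 τ') := by
  intro x hx
  set e : ℕ → ℕ := fun j => x (2 * j + 0) with hedef
  set y := simB 0 τ' e with hydef
  have hyL : y ∉ phiCode '' L ∪ Dtwo ∪ Dthree ∪ Dfour := by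
    refine hτ' y (fun n => ?_)
    exact simB_fol_str 0 τ' e (2 * n + 1) (by omega)
  rcases sim_analysis 0 (by omega) τ' e with
    ⟨n, hb⟩ | ⟨n, l, r, hs, hlp, ht⟩ | ⟨ns, hphi, hfol2⟩
  · have hb2 : stA y n = .bad2 := by rw [hb]; rfl
    rcases bad2_mem hb2 with h | h
    · exact absurd (Or.inl (Or.inl (Or.inr h))) hyL
    · exact absurd (Or.inr h) hyL
  · exact absurd (Or.inl (Or.inr (tailTrue_odd_mem_D3 hs (by omega) ht))) hyL
  · have hnsL : ns ∉ L := by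
      intro hns
      apply hyL
      rw [hydef, hphi]
      exact (phiCode_mem_iff ns L).2 hns
    have hxeq : x = ns := by
      funext m
      by_cases hm : m % 2 = 0
      · have h2 := hfol2 m hm
        rw [h2, hedef]
        show x m = x (2 * (m / 2) + 0)
        congr 1
        omega
      · have h1 := hx ((m - 1) / 2)
        rw [show 2 * ((m - 1) / 2) + 1 = m by omega] at h1
        rw [h1]
        exact extr_eq 0 (by omega) τ' x ns hphi m (by omega)
    rw [hxeq]
    exact hnsL

/-- For `L ⊆ ω^ω` and `L' = φ(L) ∪ D₂ ∪ D₃ ∪ D₄ ⊆ {0,1}^ω`: Player 1 has a winning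
strategy in the Gale-Stewart game `G L` over alphabet `ω` iff Player 1 has one in
`G L'` over alphabet `{0,1}`, and similarly for Player 2; in particular `G L` is
determined iff `G L'` is determined. -/
theorem coded_game_equivalence (L : Set (ℕ → ℕ)) :
    ((∃ σ, P1Winning L σ) ↔
      ∃ σ', P1Winning (phiCode '' L ∪ Dtwo ∪ Dthree ∪ Dfour) σ') ∧
    ((∃ τ, P2Winning L τ) ↔
      ∃ τ', P2Winning (phiCode '' L ∪ Dtwo ∪ Dthree ∪ Dfour) τ') ∧
    (GSDetermined L ↔ GSDetermined (phiCode '' L ∪ Dtwo ∪ Dthree ∪ Dfour)) := by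
  have h1 : (∃ σ, P1Winning L σ) ↔
      ∃ σ', P1Winning (phiCode '' L ∪ Dtwo ∪ Dthree ∪ Dfour) σ' :=
    ⟨fun ⟨σ, h⟩ => ⟨bstrat 0 σ, directionA L σ h⟩,
     fun ⟨σ', h⟩ => ⟨extr 1 σ', directionB L σ' h⟩⟩
  have h2 : (∃ τ, P2Winning L τ) ↔
      ∃ τ', P2Winning (phiCode '' L ∪ Dtwo ∪ Dthree ∪ Dfour) τ' :=
    ⟨fun ⟨τ, h⟩ => ⟨bstrat 1 τ, directionC L τ h⟩,
     fun ⟨τ', h⟩ => ⟨extr 0 τ', directionD L τ' h⟩⟩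
  exact ⟨h1, h2, or_congr h1 h2⟩
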